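/- Let B ≥ 2 be an integer. Then for every x ∈ (0,1], x·log_B(1/x) ≤ H_B(x) ≤ Bx/(B−1) + x·log_B(1/x), and H_B(0) = 0. -/

import Mathlib

/-- `H_B(x) = ∑_{k=0}^∞ {B^k x}/B^k` where `{y}` is the fractional part. -/
noncomputable def HB (B : ℕ) (x : ℝ) : ℝ :=
  ∑' k : ℕ, Int.fract ((B : ℝ) ^ k * x) / (B : ℝ) ^ k

theorem stmt16 (B : ℕ) (hB : 2 ≤ B) :
    (∀ x ∈ Set.Ioc (0 : ℝ) 1,
      x * Real.logb B (1 / x) ≤ HB B x ∧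
        HB B x ≤ (B : ℝ) * x / ((B : ℝ) - 1) + x * Real.logb B (1 / x)) ∧
    HB B 0 = 0 := by
  have hB2 : (2 : ℝ) ≤ (B : ℝ) := by exact_mod_cast hB
  have hB0 : (0 : ℝ) < B := by linarith
  have hB1 : (1 : ℝ) < B := by linarith
  have hBne1 : (B : ℝ) ≠ 1 := by linarith
  have hinv : (B : ℝ)⁻¹ < 1 := by
    rw [inv_lt_one_iff₀]; right; exact hB1
  have hinv0 : (0 : ℝ) ≤ (B : ℝ)⁻¹ := by positivity
  have hgeo : Summable (fun k : ℕ => ((B : ℝ)⁻¹) ^ k) :=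
    summable_geometric_of_lt_one hinv0 hinv
  constructor
  · intro x hx
    obtain ⟨hx0, hx1⟩ := hx
    set f : ℕ → ℝ := fun k => Int.fract ((B : ℝ) ^ k * x) / (B : ℝ) ^ k with hf
    have hfnn : ∀ k, 0 ≤ f k := fun k =>
      div_nonneg (Int.fract_nonneg _) (by positivity)
    have hfle : ∀ k, f k ≤ ((B : ℝ)⁻¹) ^ k := fun k => by
      rw [hf, inv_pow]
      rw [div_le_iff₀ (by positivity), inv_mul_cancel₀ (by positivity)]
      exact le_of_lt (Int.fract_lt_one _)
    have hsum : Summable f := hgeo.of_nonneg_of_le hfnn hfle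
    have hHB : HB B x = ∑' k, f k := rfl
    set L := Real.logb B (1 / x) with hLdef
    have hL0 : 0 ≤ L := Real.logb_nonneg hB1 (one_le_one_div hx0 hx1)
    have hBL : (B : ℝ) ^ L = 1 / x := Real.rpow_logb hB0 hBne1 (by positivity)
    have hxL : (B : ℝ) ^ (-L) = x := by
      rw [Real.rpow_neg hB0.le, hBL, one_div, inv_inv]
    set n := ⌈L⌉₊ with hn
    have hfk : ∀ k < n, f k = x := by
      intro k hk
      have hkL : (k : ℝ) < L := Nat.lt_ceil.mp hk
      have hBk : (B : ℝ) ^ k * x < 1 := by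
        have : (B : ℝ) ^ (k : ℝ) < (B : ℝ) ^ L :=
          Real.rpow_lt_rpow_left_iff hB1 |>.mpr hkL
        rw [Real.rpow_natCast, hBL] at this
        calc (B : ℝ) ^ k * x < (1 / x) * x := by
              apply mul_lt_mul_of_pos_right this hx0
          _ = 1 := by field_simp
      have hfr : Int.fract ((B : ℝ) ^ k * x) = (B : ℝ) ^ k * x :=
        Int.fract_eq_self.mpr ⟨by positivity, hBk⟩
      rw [hf]; simp only [hfr]
      field_simp
    have hsumn : ∑ k ∈ Finset.range n, f k = n * x := by
      rw [Finset.sum_congr rfl (fun k hk => hfk k (Finset.mem_range.mp hk))]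
      simp [mul_comm]
    constructor
    · -- lower bound
      have h1 : x * L ≤ (n : ℝ) * x := by
        have := Nat.le_ceil L
        nlinarith
      have h2 : ∑ k ∈ Finset.range n, f k ≤ ∑' k, f k :=
        Summable.sum_le_tsum _ (fun k _ => hfnn k) hsum
      rw [hHB]; rw [hsumn] at h2; linarith
    · -- upper bound
      have hsplit : (∑ i ∈ Finset.range n, f i) + ∑' i, f (i + n) = ∑' i, f i :=
        Summable.sum_add_tsum_nat_add n hsum
      have htail : ∑' i, f (i + n) ≤ ((B : ℝ)⁻¹) ^ n * (1 - (B : ℝ)⁻¹)⁻¹ := by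
        have h1 : ∑' i, f (i + n) ≤ ∑' i : ℕ, ((B : ℝ)⁻¹) ^ (i + n) := by
          apply Summable.tsum_le_tsum (fun i => hfle (i + n)) ((summable_nat_add_iff n).mpr hsum)
          exact (summable_nat_add_iff n).mpr hgeo
        calc ∑' i, f (i + n) ≤ ∑' i : ℕ, ((B : ℝ)⁻¹) ^ (i + n) := h1
          _ = ((B : ℝ)⁻¹) ^ n * (1 - (B : ℝ)⁻¹)⁻¹ := by
              simp only [pow_add]
              rw [tsum_mul_right, tsum_geometric_of_lt_one hinv0 hinv, mul_comm _ (((B:ℝ)⁻¹)^n)]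
        -- done
      -- now the key arithmetic
      set t : ℝ := (n : ℝ) - L with ht
      have ht0 : 0 ≤ t := by have := Nat.le_ceil L; simp [ht]; linarith
      have ht1 : t ≤ 1 := by
        have := Nat.ceil_lt_add_one hL0
        simp [ht]; linarith
      have hpowt : ((B : ℝ)⁻¹) ^ n = (B : ℝ) ^ (-t) * x := by
        rw [inv_pow, ← Real.rpow_natCast (B : ℝ) n, ← Real.rpow_neg hB0.le, ← hxL,
          ← Real.rpow_add hB0]
        ring_nf
        congr 1; rw [ht]; ring
      have hkey : (B : ℝ) ^ (-t) ≤ (1 - t) + t * (B : ℝ)⁻¹ := by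
        have hg := Real.geom_mean_le_arith_mean2_weighted (by linarith : (0:ℝ) ≤ 1 - t)
          ht0 (by norm_num : (0:ℝ) ≤ 1) hinv0 (by ring)
        calc (B : ℝ) ^ (-t) = (1:ℝ) ^ (1 - t) * ((B : ℝ)⁻¹) ^ t := by
              rw [Real.one_rpow, one_mul, ← Real.rpow_neg_one,
                ← Real.rpow_mul hB0.le]
              norm_num
          _ ≤ (1 - t) * 1 + t * (B : ℝ)⁻¹ := hg
          _ = (1 - t) + t * (B : ℝ)⁻¹ := by ring
      have hgs : (1 - (B : ℝ)⁻¹)⁻¹ = (B : ℝ) / ((B : ℝ) - 1) := by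
        field_simp
      have hexp : (0 : ℝ) < (B : ℝ) ^ (-t) := Real.rpow_pos_of_pos hB0 _
      rw [hHB, ← hsplit, hsumn]
      have hfinal : (n : ℝ) * x + ((B : ℝ)⁻¹) ^ n * (1 - (B : ℝ)⁻¹)⁻¹ ≤
          (B : ℝ) * x / ((B : ℝ) - 1) + x * L := by
        rw [hpowt, hgs]
        have hnL : (n : ℝ) = L + t := by rw [ht]; ring
        rw [hnL]
        have hB1' : (0 : ℝ) < (B : ℝ) - 1 := by linarith
        have expand : ((B:ℝ) * x / ((B:ℝ) - 1) + x * L) - ((L + t) * x + (B:ℝ)^(-t) * x * ((B:ℝ)/((B:ℝ)-1)))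
            = x * ((B:ℝ) - (B:ℝ)^(-t) * (B:ℝ) - t * ((B:ℝ)-1)) / ((B:ℝ)-1) := by
          field_simp
          ring
        rw [← sub_nonneg, expand]
        apply div_nonneg _ (by linarith)
        apply mul_nonneg hx0.le
        have : (B : ℝ)⁻¹ * (B : ℝ) = 1 := inv_mul_cancel₀ (by positivity)
        nlinarith [hkey]
      linarith [htail]
  · simp [HB]
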